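/- Suppose the type map Θ is continuously differentiable and strictly decreasing on [ωl, ωu], C has a continuous partial derivative C_θ in its second argument, for every θ the map q̂ ↦ C_θ(q̂, θ) is nondecreasing, the allocation q is nondecreasing and continuous, and the revenue satisfies R(ω) = R(ω′) − ∫_{ω′}^{ω} C_θ(q(ŝ), Θ(ŝ)) · Θ′(ŝ) dŝ for all ω, ω′ ∈ [ωl, ωu]. Then the menu (q, t) is incentive compatible in ω: R(ω) ≥ t(ω̂) − C(q(ω̂), Θ(ω)) for all ω, ω̂ ∈ [ωl, ωu]. Moreover, if in addition C_θ ≥ 0 everywhere, then R is nondecreasing on [ωl, ωu]. -/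

import Mathlib

open Set Topology Filter

/-- **Converse of revenue equivalence.** If the type map `Θ` is continuously differentiable
and strictly decreasing on `[ωl, ωu]`, `C` has a continuous partial derivative `Cθ` in its
second argument, `x ↦ Cθ x θ` is nondecreasing for every `θ`, the allocation `q` is
nondecreasing and continuous, and the revenue satisfies the revenue-equivalence formula, then
the menu `(q, t)` is incentive compatible in `ω`. Moreover, if in addition `Cθ ≥ 0`
everywhere, then `R` is nondecreasing on `[ωl, ωu]`. -/
theorem IC_of_revenue_equivalence
    (ωl ωu : ℝ) (hω : ωl < ωu)
    (C Cθ : ℝ → ℝ → ℝ) (Θ Θ' q t : ℝ → ℝ)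
    (hCderiv : ∀ x θ, HasDerivAt (fun s => C x s) (Cθ x θ) θ)
    (hCθcont : Continuous (Function.uncurry Cθ))
    (hΘderiv : ∀ ω ∈ Icc ωl ωu, HasDerivAt Θ (Θ' ω) ω)
    (hΘ'cont : ContinuousOn Θ' (Icc ωl ωu))
    (hΘanti : StrictAntiOn Θ (Icc ωl ωu))
    (hCθmono : ∀ θ, Monotone (fun x => Cθ x θ))
    (hqmono : MonotoneOn q (Icc ωl ωu))
    (hqcont : ContinuousOn q (Icc ωl ωu))
    (R : ℝ → ℝ)
    (hR : ∀ ω, R ω = t ω - C (q ω) (Θ ω))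
    (hRE : ∀ ω ∈ Icc ωl ωu, ∀ ω' ∈ Icc ωl ωu,
      R ω = R ω' - ∫ s in ω'..ω, Cθ (q s) (Θ s) * Θ' s) :
    (∀ ω ∈ Icc ωl ωu, ∀ ωh ∈ Icc ωl ωu, R ω ≥ t ωh - C (q ωh) (Θ ω)) ∧
    ((∀ x θ, 0 ≤ Cθ x θ) → MonotoneOn R (Icc ωl ωu)) := by
  -- continuity of Θ on the interval
  have hΘcont : ContinuousOn Θ (Icc ωl ωu) := fun s hs =>
    (hΘderiv s hs).continuousAt.continuousWithinAt
  -- Θ' is nonpositive on the interval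
  have hΘ'nonpos : ∀ s ∈ Icc ωl ωu, Θ' s ≤ 0 := by
    intro s hs
    obtain ⟨h1, h2⟩ := hs
    have htend := hasDerivAt_iff_tendsto_slope.mp (hΘderiv s ⟨h1, h2⟩)
    rcases lt_or_eq_of_le h2 with hlt | heq
    · -- approach from the right through `Ioo s ωu`
      have hne : (𝓝[Ioo s ωu] s).NeBot := by
        rw [← mem_closure_iff_nhdsWithin_neBot, closure_Ioo hlt.ne]
        exact ⟨le_refl _, hlt.le⟩
      have hsub : Ioo s ωu ⊆ {s}ᶜ := fun x hx => ne_of_gt hx.1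
      refine le_of_tendsto (htend.mono_left (nhdsWithin_mono _ hsub)) ?_
      filter_upwards [self_mem_nhdsWithin] with x hx
      have hxI : x ∈ Icc ωl ωu := ⟨h1.trans hx.1.le, hx.2.le⟩
      have hΘx : Θ x < Θ s := hΘanti ⟨h1, h2⟩ hxI hx.1
      rw [slope_def_field, div_eq_mul_inv]
      exact mul_nonpos_of_nonpos_of_nonneg (by linarith)
        (inv_nonneg.mpr (by linarith [hx.1]))
    · -- s = ωu: approach from the left through `Ioo ωl s`
      have hlt' : ωl < s := heq ▸ hω
      have hne : (𝓝[Ioo ωl s] s).NeBot := by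
        rw [← mem_closure_iff_nhdsWithin_neBot, closure_Ioo hlt'.ne]
        exact ⟨hlt'.le, le_refl _⟩
      have hsub : Ioo ωl s ⊆ {s}ᶜ := fun x hx => ne_of_lt hx.2
      refine le_of_tendsto (htend.mono_left (nhdsWithin_mono _ hsub)) ?_
      filter_upwards [self_mem_nhdsWithin] with x hx
      have hxI : x ∈ Icc ωl ωu := ⟨hx.1.le, hx.2.le.trans h2⟩
      have hΘx : Θ s < Θ x := hΘanti hxI ⟨h1, h2⟩ hx.2
      rw [slope_def_field, div_eq_mul_inv]
      exact mul_nonpos_of_nonneg_of_nonpos (by linarith)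
        (inv_nonpos.mpr (by linarith [hx.2]))
  -- continuity of the integrands
  have hg : ContinuousOn (fun s => Cθ (q s) (Θ s) * Θ' s) (Icc ωl ωu) :=
    (hCθcont.comp_continuousOn (hqcont.prodMk hΘcont)).mul hΘ'cont
  have hgx : ∀ x : ℝ, ContinuousOn (fun s => Cθ x (Θ s) * Θ' s) (Icc ωl ωu) := fun x =>
    (hCθcont.comp_continuousOn (continuousOn_const.prodMk hΘcont)).mul hΘ'cont
  -- fundamental theorem of calculus for `s ↦ C x (Θ s)`
  have hFTC : ∀ x : ℝ, ∀ a ∈ Icc ωl ωu, ∀ b ∈ Icc ωl ωu,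
      (∫ s in a..b, Cθ x (Θ s) * Θ' s) = C x (Θ b) - C x (Θ a) := by
    intro x a ha b hb
    have huIcc : uIcc a b ⊆ Icc ωl ωu := uIcc_subset_Icc ha hb
    refine intervalIntegral.integral_eq_sub_of_hasDerivAt (f := fun s => C x (Θ s)) (fun s hs => ?_) ?_
    · exact (hCderiv x (Θ s)).comp s (hΘderiv s (huIcc hs))
    · exact ((hgx x).mono huIcc).intervalIntegrable
  -- integral representation of the IC surplus
  have hsurplus : ∀ ω ∈ Icc ωl ωu, ∀ ωh ∈ Icc ωl ωu,
      R ω - (t ωh - C (q ωh) (Θ ω)) =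
        ∫ s in ωh..ω, (Cθ (q ωh) (Θ s) - Cθ (q s) (Θ s)) * Θ' s := by
    intro ω hωm ωh hωhm
    have huIcc : uIcc ωh ω ⊆ Icc ωl ωu := uIcc_subset_Icc hωhm hωm
    have int1 : IntervalIntegrable (fun s => Cθ (q ωh) (Θ s) * Θ' s)
        MeasureTheory.volume ωh ω := ((hgx (q ωh)).mono huIcc).intervalIntegrable
    have int2 : IntervalIntegrable (fun s => Cθ (q s) (Θ s) * Θ' s)
        MeasureTheory.volume ωh ω := (hg.mono huIcc).intervalIntegrable
    have hsplit : (∫ s in ωh..ω, (Cθ (q ωh) (Θ s) - Cθ (q s) (Θ s)) * Θ' s) =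
        (∫ s in ωh..ω, Cθ (q ωh) (Θ s) * Θ' s) - ∫ s in ωh..ω, Cθ (q s) (Θ s) * Θ' s := by
      rw [← intervalIntegral.integral_sub int1 int2]
      congr 1; funext s; ring
    have hkey := hRE ω hωm ωh hωhm
    have hC := hFTC (q ωh) ωh hωhm ω hωm
    have hRωh := hR ωh
    rw [hsplit, hC]
    linarith
  constructor
  · -- incentive compatibility
    intro ω hωm ωh hωhm
    have hmain := hsurplus ω hωm ωh hωhm
    have hnonneg : 0 ≤ ∫ s in ωh..ω, (Cθ (q ωh) (Θ s) - Cθ (q s) (Θ s)) * Θ' s := by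
      rcases le_total ωh ω with hle | hle
      · refine intervalIntegral.integral_nonneg hle fun u hu => ?_
        have huI : u ∈ Icc ωl ωu := ⟨hωhm.1.trans hu.1, hu.2.trans hωm.2⟩
        have hq : q ωh ≤ q u := hqmono hωhm huI hu.1
        have hCle : Cθ (q ωh) (Θ u) ≤ Cθ (q u) (Θ u) := hCθmono (Θ u) hq
        nlinarith [hΘ'nonpos u huI]
      · rw [intervalIntegral.integral_symm, neg_nonneg,
          ← neg_nonneg, ← intervalIntegral.integral_neg]
        refine le_trans (le_of_eq ?_)
          (intervalIntegral.integral_nonneg hle fun u hu => ?_)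
        · rfl
        have huI : u ∈ Icc ωl ωu := ⟨hωm.1.trans hu.1, hu.2.trans hωhm.2⟩
        have hq : q u ≤ q ωh := hqmono huI hωhm hu.2
        have hCle : Cθ (q u) (Θ u) ≤ Cθ (q ωh) (Θ u) := hCθmono (Θ u) hq
        have := hΘ'nonpos u huI
        have : 0 ≤ -((Cθ (q ωh) (Θ u) - Cθ (q u) (Θ u)) * Θ' u) := by
          rw [neg_nonneg]
          exact mul_nonpos_of_nonneg_of_nonpos (by linarith) (hΘ'nonpos u huI)
        simpa using this
    linarith
  · -- monotonicity of R
    intro hCθpos ω1 h1 ω2 h2 hle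
    have hkey := hRE ω2 h2 ω1 h1
    have huIcc : uIcc ω1 ω2 ⊆ Icc ωl ωu := uIcc_subset_Icc h1 h2
    have hnonpos : (∫ s in ω1..ω2, Cθ (q s) (Θ s) * Θ' s) ≤ 0 := by
      rw [← neg_nonneg, ← intervalIntegral.integral_neg]
      refine intervalIntegral.integral_nonneg hle fun u hu => ?_
      have huI : u ∈ Icc ωl ωu := ⟨h1.1.trans hu.1, hu.2.trans h2.2⟩
      have : 0 ≤ -(Cθ (q u) (Θ u) * Θ' u) := by
        rw [neg_nonneg]
        exact mul_nonpos_of_nonneg_of_nonpos (hCθpos _ _) (hΘ'nonpos u huI)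
      simpa using this
    linarith
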